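/- Let m ≥ 3. Then the binary code C_{D_1} is minimal: for all (a,b), (a',b') ∈ F_{2^m} × F_{2^m} such that the codewords c(a,b) and c(a',b') are both nonzero, if the support of c(a',b') is contained in the support of c(a,b) (i.e., for every (x,y) ∈ D_1, Tr(a'xy + b'x) = 1 implies Tr(axy + bx) = 1), then c(a',b') = c(a,b) (i.e., Tr(a'xy + b'x) = Tr(axy + bx) for every (x,y) ∈ D_1). -/

import Mathlib

attribute [local instance] Classical.propDecidable

noncomputable instance (m : ℕ) : Fintype (GaloisField 2 m) := Fintype.ofFinite _

/-- The absolute trace map from `F_{2^m}` to `F_2`. -/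
noncomputable def Tr (m : ℕ) (x : GaloisField 2 m) : ZMod 2 :=
  Algebra.trace (ZMod 2) (GaloisField 2 m) x

/-- For `t ∈ F_2`, `sgn t` is the integer `(-1)^t`. -/
def sgn : ZMod 2 → ℤ := fun t => if t = 0 then 1 else -1

/-- The set `Υ₁ = {r + r⁻¹ : r ∈ F_{2^m}^*, r ≠ 1}`. -/
def Ups1 (m : ℕ) : Set (GaloisField 2 m) :=
  {u | ∃ r : GaloisField 2 m, r ≠ 0 ∧ r ≠ 1 ∧ u = r + r⁻¹}

section Aux

variable (m : ℕ)

lemma Tr_add (u v : GaloisField 2 m) : Tr m (u + v) = Tr m u + Tr m v :=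
  map_add (Algebra.trace (ZMod 2) (GaloisField 2 m)) u v

lemma Tr_zero : Tr m 0 = 0 :=
  map_zero (Algebra.trace (ZMod 2) (GaloisField 2 m))

lemma htwo : ∀ t : ZMod 2, t = 0 ∨ t = 1 := by decide

lemma addcancel {u v : GaloisField 2 m} (h : u + v = 0) : u = v := by
  have h1 := eq_neg_of_add_eq_zero_left h
  rwa [CharTwo.neg_eq] at h1

/-- Nondegeneracy of the trace. -/
lemma L1 {u : GaloisField 2 m} (hu : u ≠ 0) : ∃ y, Tr m (u * y) = 1 := by
  obtain ⟨z, hz⟩ := Algebra.trace_surjective (ZMod 2) (GaloisField 2 m) 1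
  refine ⟨u⁻¹ * z, ?_⟩
  rw [← mul_assoc, mul_inv_cancel₀ hu, one_mul]
  exact hz

/-- Independence of two distinct nonzero functionals. -/
lemma L2 {u v : GaloisField 2 m} (hu : u ≠ 0) (hv : v ≠ 0) (huv : u ≠ v) (c : ZMod 2) :
    ∃ y, Tr m (u * y) = 0 ∧ Tr m (v * y) = c := by
  rcases htwo c with rfl | rfl
  · exact ⟨0, by rw [mul_zero, Tr_zero], by rw [mul_zero, Tr_zero]⟩
  obtain ⟨y₂, hy₂⟩ := L1 m hv
  by_cases h2 : Tr m (u * y₂) = 0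
  · exact ⟨y₂, h2, hy₂⟩
  have h2' : Tr m (u * y₂) = 1 := (htwo _).resolve_left h2
  have huv' : u + v ≠ 0 := fun h0 => huv (addcancel m h0)
  obtain ⟨y₁, hy₁⟩ := L1 m huv'
  have hy₁' : Tr m (u * y₁) + Tr m (v * y₁) = 1 := by
    rw [← Tr_add, ← add_mul]; exact hy₁
  by_cases h1 : Tr m (u * y₁) = 0
  · have hv1 : Tr m (v * y₁) = 1 := by rwa [h1, zero_add] at hy₁'
    exact ⟨y₁, h1, hv1⟩
  have h1' : Tr m (u * y₁) = 1 := (htwo _).resolve_left h1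
  have hv1 : Tr m (v * y₁) = 0 := by
    rw [h1'] at hy₁'
    rcases htwo (Tr m (v * y₁)) with h | h
    · exact h
    · rw [h] at hy₁'; exact absurd hy₁' (by decide)
  refine ⟨y₁ + y₂, ?_, ?_⟩
  · rw [mul_add, Tr_add, h1', h2']; decide
  · rw [mul_add, Tr_add, hv1, hy₂]; decide

/-- Kernel containment forces equality of functionals. -/
lemma L3 {u v : GaloisField 2 m} (h : ∀ y, Tr m (u * y) = 0 → Tr m (v * y) = 0) :
    v = 0 ∨ v = u := by
  by_cases hv : v = 0
  · exact Or.inl hv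
  by_cases huv : v = u
  · exact Or.inr huv
  by_cases hu : u = 0
  · obtain ⟨y, hy⟩ := L1 m hv
    have := h y (by rw [hu, zero_mul, Tr_zero])
    rw [this] at hy
    exact absurd hy (by decide)
  · obtain ⟨y, h0, h1⟩ := L2 m hu hv (fun he => huv he.symm) 1
    have := h y h0
    rw [this] at h1
    exact absurd h1 (by decide)

lemma cardF (hm : 3 ≤ m) : Fintype.card (GaloisField 2 m) = 2 ^ m := by
  rw [← Nat.card_eq_fintype_card]
  exact GaloisField.card 2 m (by omega)

lemma Lsum (c : GaloisField 2 m) (hm : 3 ≤ m) :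
    (Finset.univ.filter fun x => Tr m (c * x) = 0).card
      + (Finset.univ.filter fun x => Tr m (c * x) = 1).card = 2 ^ m := by
  have h := Finset.card_filter_add_card_filter_not
    (s := (Finset.univ : Finset (GaloisField 2 m))) (p := fun x => Tr m (c * x) = 0)
  rw [Finset.card_univ, cardF m hm] at h
  rw [← h]
  congr 2
  apply Finset.filter_congr
  intro x _
  constructor
  · intro h1
    intro h0
    rw [h1] at h0; exact absurd h0 (by decide)
  · intro h0
    exact (htwo _).resolve_left h0

lemma L4 {c : GaloisField 2 m} (hc : c ≠ 0) (hm : 3 ≤ m) :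
    (Finset.univ.filter fun x => Tr m (c * x) = 1).card = 2 ^ (m - 1) := by
  obtain ⟨y₀, hy₀⟩ := L1 m hc
  have hb : (Finset.univ.filter fun x => Tr m (c * x) = 0).card
      = (Finset.univ.filter fun x => Tr m (c * x) = 1).card := by
    apply Finset.card_nbij' (fun x => x + y₀) (fun x => x + y₀)
    · intro x hx
      rw [Finset.mem_coe, Finset.mem_filter] at hx ⊢
      refine ⟨Finset.mem_univ _, ?_⟩
      rw [mul_add, Tr_add, hx.2, hy₀, zero_add]
    · intro x hx
      rw [Finset.mem_coe, Finset.mem_filter] at hx ⊢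
      refine ⟨Finset.mem_univ _, ?_⟩
      rw [mul_add, Tr_add, hx.2, hy₀]; decide
    · intro x _; beta_reduce; rw [add_assoc, CharTwo.add_self_eq_zero, add_zero]
    · intro x _; beta_reduce; rw [add_assoc, CharTwo.add_self_eq_zero, add_zero]
  have hsum := Lsum m c hm
  rw [hb] at hsum
  have hpow : 2 ^ m = 2 * 2 ^ (m - 1) := by
    rw [← pow_succ']
    congr 1
    omega
  omega

lemma L4b (c : GaloisField 2 m) (hm : 3 ≤ m) :
    2 ^ (m - 1) ≤ (Finset.univ.filter fun x => Tr m (c * x) = 0).card := by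
  by_cases hc : c = 0
  · have : (Finset.univ.filter fun x : GaloisField 2 m => Tr m (c * x) = 0) = Finset.univ := by
      apply Finset.filter_true_of_mem
      intro x _
      rw [hc, zero_mul, Tr_zero]
    rw [this, Finset.card_univ, cardF m hm]
    exact Nat.pow_le_pow_right (by norm_num) (by omega)
  · have hsum := Lsum m c hm
    rw [L4 m hc hm] at hsum
    have hpow : 2 ^ m = 2 * 2 ^ (m - 1) := by
      rw [← pow_succ']; congr 1; omega
    omega

lemma L6 {α : GaloisField 2 m} (hα : α ≠ 0) :
    (Finset.univ.filter fun x : GaloisField 2 m => x ^ 2 + α * x + 1 = 0).card ≤ 2 := by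
  by_cases hE : (Finset.univ.filter fun x : GaloisField 2 m => x ^ 2 + α * x + 1 = 0).Nonempty
  · obtain ⟨r, hr⟩ := hE
    rw [Finset.mem_filter] at hr
    have hr' := hr.2
    have h2 : (2 : GaloisField 2 m) = 0 := CharTwo.two_eq_zero
    have hsub : (Finset.univ.filter fun x : GaloisField 2 m => x ^ 2 + α * x + 1 = 0)
        ⊆ {r, r + α} := by
      intro z hz
      rw [Finset.mem_filter] at hz
      have hz' := hz.2
      have key : (z + r) * (z + r + α) = 0 := by
        linear_combination hz' + hr' + (z * r - 1) * h2
      rcases mul_eq_zero.mp key with h | h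
      · rw [Finset.mem_insert]
        exact Or.inl (addcancel m h)
      · rw [Finset.mem_insert, Finset.mem_singleton]
        right
        have : z + (r + α) = 0 := by rw [← add_assoc]; exact h
        exact addcancel m this
    calc (Finset.univ.filter fun x : GaloisField 2 m => x ^ 2 + α * x + 1 = 0).card
        ≤ ({r, r + α} : Finset (GaloisField 2 m)).card := Finset.card_le_card hsub
      _ ≤ 2 := by
          apply le_trans (Finset.card_insert_le _ _)
          simp
  · rw [Finset.not_nonempty_iff_eq_empty] at hE
    rw [hE]; simp

lemma L7 {b b' : GaloisField 2 m} (hm : 3 ≤ m) (hb' : b' ≠ 0)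
    (h : ∀ x, x ≠ 0 → Tr m (b' * x) = 1 → Tr m (b * x) = 1) : b = b' := by
  by_contra hbb
  have hd : b + b' ≠ 0 := fun h0 => hbb (addcancel m h0)
  have hssub : (Finset.univ.filter fun x => Tr m ((b + b') * x) = 1)
      ⊂ (Finset.univ.filter fun x => Tr m (b' * x) = 0) := by
    constructor
    · intro x hx
      rw [Finset.mem_filter] at hx ⊢
      refine ⟨Finset.mem_univ _, ?_⟩
      have hx2 := hx.2
      have hxne : x ≠ 0 := by
        intro h0
        rw [h0, mul_zero, Tr_zero] at hx2
        exact absurd hx2 (by decide)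
      rcases htwo (Tr m (b' * x)) with h0 | h1
      · exact h0
      · have hb1 := h x hxne h1
        rw [add_mul, Tr_add, hb1, h1] at hx2
        exact absurd hx2 (by decide)
    · intro hcon
      have h0mem : (0 : GaloisField 2 m) ∈
          (Finset.univ.filter fun x => Tr m (b' * x) = 0) := by
        rw [Finset.mem_filter]
        exact ⟨Finset.mem_univ _, by rw [mul_zero, Tr_zero]⟩
      have := hcon h0mem
      rw [Finset.mem_filter] at this
      have h02 := this.2
      rw [mul_zero, Tr_zero] at h02
      exact absurd h02 (by decide)
  have hlt := Finset.card_lt_card hssub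
  rw [L4 m hd hm] at hlt
  have hsum := Lsum m b' hm
  rw [L4 m hb' hm] at hsum
  have hpow : 2 ^ m = 2 * 2 ^ (m - 1) := by
    rw [← pow_succ']; congr 1; omega
  omega

lemma sq_ne {x : GaloisField 2 m} (hx1 : x ≠ 1) : x ^ 2 + 1 ≠ 0 := by
  intro h0
  apply hx1
  have h2 : (2 : GaloisField 2 m) = 0 := CharTwo.two_eq_zero
  have hsq : (x + 1) * (x + 1) = 0 := by linear_combination h0 + x * h2
  rcases mul_eq_zero.mp hsq with h | h
  all_goals exact addcancel m h

end Aux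

theorem stmt16 (m : ℕ) (hm : 3 ≤ m) (a b a' b' : GaloisField 2 m)
    (hne : ∃ x y : GaloisField 2 m, x ≠ 0 ∧ Tr m (y * x ^ 2 + y) = 0 ∧
      Tr m (a * x * y + b * x) = 1)
    (hne' : ∃ x y : GaloisField 2 m, x ≠ 0 ∧ Tr m (y * x ^ 2 + y) = 0 ∧
      Tr m (a' * x * y + b' * x) = 1)
    (hsupp : ∀ x y : GaloisField 2 m, x ≠ 0 → Tr m (y * x ^ 2 + y) = 0 →
      Tr m (a' * x * y + b' * x) = 1 → Tr m (a * x * y + b * x) = 1) :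
    ∀ x y : GaloisField 2 m, x ≠ 0 → Tr m (y * x ^ 2 + y) = 0 →
      Tr m (a' * x * y + b' * x) = Tr m (a * x * y + b * x) := by
  classical
  have h2F : (2 : GaloisField 2 m) = 0 := CharTwo.two_eq_zero
  -- reformulate hsupp
  have hsupp' : ∀ x y : GaloisField 2 m, x ≠ 0 → Tr m ((x ^ 2 + 1) * y) = 0 →
      Tr m ((a' * x) * y) + Tr m (b' * x) = 1 →
      Tr m ((a * x) * y) + Tr m (b * x) = 1 := by
    intro x y hx hy hv
    have e1 : (x ^ 2 + 1) * y = y * x ^ 2 + y := by ring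
    have e2 : a' * x * y + b' * x = (a' * x) * y + b' * x := by ring
    have e3 : a * x * y + b * x = (a * x) * y + b * x := by ring
    have := hsupp x y hx (by rw [← e1]; exact hy)
      (by rw [e2, Tr_add]; exact hv)
    rw [e3, Tr_add] at this
    exact this
  have key : a' = a ∧ b' = b := by
    by_cases ha' : a' = 0
    · -- case a' = 0
      obtain ⟨x₀, y₀, hx₀, hy₀, hv₀⟩ := hne'
      have hb' : b' ≠ 0 := by
        intro h0
        rw [ha', h0] at hv₀
        simp only [zero_mul, mul_zero, add_zero, zero_add] at hv₀
        rw [Tr_zero] at hv₀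
        exact absurd hv₀ (by decide)
      have ha : a = 0 := by
        by_contra ha
        have hsub : (Finset.univ.filter fun x => Tr m (b' * x) = 1)
            ⊆ (Finset.univ.filter fun x : GaloisField 2 m => x ^ 2 + a * x + 1 = 0) := by
          intro x hxmem
          rw [Finset.mem_filter] at hxmem ⊢
          refine ⟨Finset.mem_univ _, ?_⟩
          have hbx : Tr m (b' * x) = 1 := hxmem.2
          have hxne : x ≠ 0 := by
            intro h0; rw [h0, mul_zero, Tr_zero] at hbx; exact absurd hbx (by decide)
          -- trace of b*x is 1 (take y = 0)
          have hb1 : Tr m ((a * x) * 0) + Tr m (b * x) = 1 := by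
            apply hsupp' x 0 hxne (by rw [mul_zero, Tr_zero])
            rw [mul_zero, Tr_zero, zero_add]
            exact hbx
          rw [mul_zero, Tr_zero, zero_add] at hb1
          have hker : ∀ y, Tr m ((x ^ 2 + 1) * y) = 0 → Tr m ((a * x) * y) = 0 := by
            intro y hy
            have h1 : Tr m ((a * x) * y) + Tr m (b * x) = 1 := by
              apply hsupp' x y hxne hy
              rw [ha', zero_mul, zero_mul, Tr_zero, zero_add]
              exact hbx
            rw [hb1] at h1
            rcases htwo (Tr m ((a * x) * y)) with h | h
            · exact h
            · rw [h] at h1; exact absurd h1 (by decide)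
          rcases L3 m hker with h0 | h1
          · exact absurd h0 (mul_ne_zero ha hxne)
          · linear_combination h1 + (x ^ 2 + 1) * h2F
        have hc1 := Finset.card_le_card hsub
        rw [L4 m hb' hm] at hc1
        have hc2 := L6 m (α := a) ha
        have hp : 2 ^ 2 ≤ 2 ^ (m - 1) := Nat.pow_le_pow_right (by norm_num) (by omega)
        omega
      have hb : b = b' := by
        apply L7 m hm hb'
        intro x hx hbx
        have h1 : Tr m ((a * x) * 0) + Tr m (b * x) = 1 := by
          apply hsupp' x 0 hx (by rw [mul_zero, Tr_zero])
          rw [mul_zero, Tr_zero, zero_add]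
          exact hbx
        rw [mul_zero, Tr_zero, zero_add] at h1
        exact h1
      exact ⟨by rw [ha', ha], hb.symm⟩
    · -- case a' ≠ 0
      have h1supp : ∀ y, Tr m (a' * y) + Tr m b' = 1 → Tr m (a * y) + Tr m b = 1 := by
        intro y hy
        have := hsupp' 1 y one_ne_zero
          (by
            have : ((1 : GaloisField 2 m) ^ 2 + 1) = 0 := by
              rw [one_pow]; linear_combination h2F
            rw [this, zero_mul, Tr_zero])
          (by rw [mul_one]; rwa [show Tr m (b' * 1) = Tr m b' by rw [mul_one]])
        rw [mul_one, show Tr m (b * 1) = Tr m b by rw [mul_one]] at this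
        exact this
      -- find y₁ with Tr(a' y₁) + Tr b' = 1
      obtain ⟨y₁, hy₁⟩ : ∃ y, Tr m (a' * y) + Tr m b' = 1 := by
        rcases htwo (Tr m b') with h | h
        · obtain ⟨y, hy⟩ := L1 m ha'
          exact ⟨y, by rw [hy, h, add_zero]⟩
        · exact ⟨0, by rw [mul_zero, Tr_zero, h, zero_add]⟩
      have hay₁ := h1supp y₁ hy₁
      have ha : a ≠ 0 := by
        intro ha0
        -- then Tr b = 1
        have hTb : Tr m b = 1 := by
          have := hay₁
          rw [ha0, zero_mul, Tr_zero, zero_add] at this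
          exact this
        -- every x with Tr(b x) = 0 is 0 or a root of x² + a'x + 1
        have hsub : (Finset.univ.filter fun x => Tr m (b * x) = 0)
            ⊆ insert (0 : GaloisField 2 m)
              (Finset.univ.filter fun x : GaloisField 2 m => x ^ 2 + a' * x + 1 = 0) := by
          intro x hxmem
          rw [Finset.mem_filter] at hxmem
          have hbx0 := hxmem.2
          rw [Finset.mem_insert, Finset.mem_filter]
          by_contra hcon
          push_neg at hcon
          obtain ⟨hxne, hroot⟩ := hcon
          have hroot' : x ^ 2 + a' * x + 1 ≠ 0 := fun h => hroot (Finset.mem_univ _) h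
          have hx1 : x ≠ 1 := by
            intro h1
            rw [h1, mul_one] at hbx0
            -- but Tr b = 1
            rw [hTb] at hbx0
            exact absurd hbx0 (by decide)
          have hu : x ^ 2 + 1 ≠ 0 := sq_ne m hx1
          have hv : a' * x ≠ 0 := mul_ne_zero ha' hxne
          have huv : x ^ 2 + 1 ≠ a' * x := by
            intro he
            apply hroot'
            linear_combination -he + (x ^ 2 + 1) * h2F
          obtain ⟨y, hku, hkv⟩ := L2 m hu hv huv (1 + Tr m (b' * x))
          have h1 : Tr m ((a * x) * y) + Tr m (b * x) = 1 := by
            apply hsupp' x y hxne hku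
            rw [hkv]
            rcases htwo (Tr m (b' * x)) with h | h <;> rw [h] <;> decide
          rw [ha0, zero_mul, zero_mul, Tr_zero, zero_add, hbx0] at h1
          exact absurd h1 (by decide)
        have hc1 := Finset.card_le_card hsub
        have hc2 : (insert (0 : GaloisField 2 m)
            (Finset.univ.filter fun x : GaloisField 2 m => x ^ 2 + a' * x + 1 = 0)).card
            ≤ 3 := by
          apply le_trans (Finset.card_insert_le _ _)
          have := L6 m (α := a') ha'
          omega
        have hc3 := L4b m b hm
        have hp : 2 ^ 2 ≤ 2 ^ (m - 1) := Nat.pow_le_pow_right (by norm_num) (by omega)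
        omega
      -- a = a'
      have haa : a' = a := by
        have hker : ∀ h, Tr m (a' * h) = 0 → Tr m (a * h) = 0 := by
          intro h hh
          have hp : Tr m (a' * (y₁ + h)) + Tr m b' = 1 := by
            rw [mul_add, Tr_add, hh, add_zero]
            exact hy₁
          have hq := h1supp (y₁ + h) hp
          rw [mul_add, Tr_add] at hq
          -- hay₁ : Tr(a y₁) + Tr b = 1 ; hq : Tr(a y₁) + Tr(a h) + Tr b = 1
          revert hay₁ hq
          generalize Tr m (a * y₁) = A
          generalize Tr m (a * h) = C
          generalize Tr m b = B
          revert A B C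
          decide
        rcases L3 m hker with h0 | h1
        · exact absurd h0 ha
        · exact h1.symm
      -- Tr b = Tr b'
      have hTbb : Tr m b = Tr m b' := by
        have h1 : Tr m (a * y₁) + Tr m b' = 1 := by rw [← haa]; exact hy₁
        revert hay₁ h1
        generalize Tr m (a * y₁) = A
        generalize Tr m b = B
        generalize Tr m b' = B'
        revert A B B'
        decide
      have hbb : b' = b := by
        by_contra hbne
        have hd : b + b' ≠ 0 := fun h0 => hbne (addcancel m h0).symm
        have hsub : (Finset.univ.filter fun x => Tr m ((b + b') * x) = 1)
            ⊆ (Finset.univ.filter fun x : GaloisField 2 m => x ^ 2 + a * x + 1 = 0) := by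
          intro x hxmem
          rw [Finset.mem_filter] at hxmem ⊢
          refine ⟨Finset.mem_univ _, ?_⟩
          have hdx := hxmem.2
          have hdx' : Tr m (b * x) + Tr m (b' * x) = 1 := by
            rw [← Tr_add, ← add_mul]; exact hdx
          have hxne : x ≠ 0 := by
            intro h0; rw [h0, mul_zero, Tr_zero] at hdx; exact absurd hdx (by decide)
          by_contra hroot
          have hx1 : x ≠ 1 := by
            intro h1
            rw [h1, mul_one, mul_one, hTbb] at hdx'
            rw [CharTwo.add_self_eq_zero] at hdx'
            exact absurd hdx' (by decide)
          have hu : x ^ 2 + 1 ≠ 0 := sq_ne m hx1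
          have hv : a * x ≠ 0 := mul_ne_zero ha hxne
          have huv : x ^ 2 + 1 ≠ a * x := by
            intro he
            apply hroot
            linear_combination -he + (x ^ 2 + 1) * h2F
          obtain ⟨y, hku, hkv⟩ := L2 m hu hv huv (1 + Tr m (b' * x))
          have h1 : Tr m ((a * x) * y) + Tr m (b * x) = 1 := by
            apply hsupp' x y hxne hku
            rw [haa, hkv]
            rcases htwo (Tr m (b' * x)) with h | h <;> rw [h] <;> decide
          rw [hkv] at h1
          -- h1 : (1 + Tr(b'x)) + Tr(bx) = 1, hdx' : Tr(bx) + Tr(b'x) = 1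
          revert h1 hdx'
          generalize Tr m (b * x) = B
          generalize Tr m (b' * x) = B'
          revert B B'
          decide
        have hc1 := Finset.card_le_card hsub
        rw [L4 m hd hm] at hc1
        have hc2 := L6 m (α := a) ha
        have hp : 2 ^ 2 ≤ 2 ^ (m - 1) := Nat.pow_le_pow_right (by norm_num) (by omega)
        omega
      exact ⟨haa, hbb⟩
  intro x y hx hy
  rw [key.1, key.2]
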